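/- Let α > 1 be the real root of p(X) = X⁴ − X³ − X² − X + 1 with α > 1, and suppose ℕ₀[α] is atomic with atoms {α^n : n ∈ ℕ₀}. Then ℕ₀[α] does not satisfy the structure property for sets of lengths: there do not exist d ∈ ℕ and N ∈ ℕ₀ such that the set of lengths of every element of ℕ₀[α] is an almost arithmetic progression with difference d and bound N. -/

import Mathlib

/-- `a` is an (additive) atom of the submonoid `S`. -/
def IsAddAtomIn {R : Type*} [AddCommMonoid R] (S : AddSubmonoid R) (a : R) : Prop :=
  a ∈ S ∧ a ≠ 0 ∧ ∀ u v, u ∈ S → v ∈ S → u ≠ 0 → v ≠ 0 → a ≠ u + v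

/-- The set of lengths of factorizations of `x` into atoms of `S`. -/
def lengthsIn {R : Type*} [AddCommMonoid R] (S : AddSubmonoid R) (x : R) : Set ℕ :=
  {ℓ | ∃ l : Multiset R, (∀ a ∈ l, IsAddAtomIn S a) ∧ l.sum = x ∧ l.card = ℓ}

/-- `S` is an almost arithmetic progression (AAP) with difference `d` and bound `N`:
`S = c + (S' ∪ S* ∪ S'') ⊆ c + dℤ`, where `S*` is a nonempty arithmetic progression with
difference `d` and `min S* = 0`, `S' ⊆ {-N, …, -1}`, and `S'' ⊆ sup S* + {1, …, N}`
(`S''` empty when `S*` is infinite). -/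
def IsAAP (S : Set ℤ) (d : ℕ) (N : ℕ) : Prop :=
  ∃ (c : ℤ) (S' S'' : Set ℤ) (m : ℕ∞), 0 < m ∧
    S' ⊆ Set.Icc (-(N : ℤ)) (-1) ∧
    (m = ⊤ → S'' = ∅) ∧
    (∀ j : ℕ, m = (j : ℕ∞) →
      S'' ⊆ Set.Icc ((d : ℤ) * ((j : ℤ) - 1) + 1) ((d : ℤ) * ((j : ℤ) - 1) + (N : ℤ))) ∧
    (∀ x ∈ S' ∪ {y : ℤ | ∃ k : ℕ, (k : ℕ∞) < m ∧ y = (d : ℤ) * k} ∪ S'', (d : ℤ) ∣ x) ∧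
    S = (c + ·) '' (S' ∪ {y : ℤ | ∃ k : ℕ, (k : ℕ∞) < m ∧ y = (d : ℤ) * k} ∪ S'')

open Polynomial in
private lemma aux_irred_f2 : Irreducible (X^4 - X^3 - X^2 - X + 1 : (ZMod 2)[X]) := by
  have hmon : (X^4 - X^3 - X^2 - X + 1 : (ZMod 2)[X]).Monic := by monicity!
  have hdeg : (X^4 - X^3 - X^2 - X + 1 : (ZMod 2)[X]).natDegree = 4 := by compute_degree!
  have hne1 : (X^4 - X^3 - X^2 - X + 1 : (ZMod 2)[X]) ≠ 1 := by
    intro h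
    rw [h] at hdeg
    simp at hdeg
  have hzm : ∀ x : ZMod 2, x = 0 ∨ x = 1 := by decide
  have hev : ∀ x : ZMod 2, eval x (X^4 - X^3 - X^2 - X + 1 : (ZMod 2)[X]) = 1 := by
    intro x
    rcases hzm x with h | h <;> subst h <;> simp <;> decide
  have hnoroot : ∀ x : ZMod 2, ¬ IsRoot (X^4 - X^3 - X^2 - X + 1 : (ZMod 2)[X]) x := by
    intro x h
    rw [IsRoot, hev x] at h
    exact one_ne_zero h
  rw [hmon.irreducible_iff_lt_natDegree_lt hne1]
  intro q hq hdq hdvd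
  rw [hdeg] at hdq
  simp only [Finset.mem_Ioc] at hdq
  obtain ⟨hlo, hhi⟩ := hdq
  interval_cases hq2 : q.natDegree
  · -- degree 1
    have := hq.eq_X_add_C hq2
    rw [this, ← sub_neg_eq_add, ← C_neg, dvd_iff_isRoot] at hdvd
    exact hnoroot _ hdvd
  · -- degree 2
    have hroot : ∀ x : ZMod 2, IsRoot q x → False := by
      intro x hx
      have hd : X - C x ∣ q := dvd_iff_isRoot.mpr hx
      exact hnoroot x (dvd_iff_isRoot.mp (hd.trans hdvd))
    set b := q.coeff 1 with hb
    set c := q.coeff 0 with hc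
    have hq2' : q = X^2 + C b * X + C c := by
      have hdX2 : degree (X^2 : (ZMod 2)[X]) = 2 := degree_X_pow 2
      have hdq2 : degree q = 2 := by
        rw [degree_eq_natDegree hq.ne_zero, hq2]; rfl
      have hsub : degree (q - X^2) < 2 := by
        have := degree_sub_lt (hdq2.trans hdX2.symm) hq.ne_zero
          (by rw [hq.leadingCoeff, Monic.leadingCoeff (monic_X_pow 2)])
        rwa [hdq2] at this
      have h1 : q - X^2 = C ((q - X^2).coeff 1) * X + C ((q - X^2).coeff 0) := by
        apply eq_X_add_C_of_degree_le_one
        exact Order.le_of_lt_succ (by exact_mod_cast hsub)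
      have hc1 : (q - X^2).coeff 1 = b := by simp [coeff_sub, hb]
      have hc0 : (q - X^2).coeff 0 = c := by simp [coeff_sub, hc]
      rw [hc1, hc0] at h1
      linear_combination (norm := ring_nf) h1
    have hevq : ∀ x : ZMod 2, eval x q = x^2 + b*x + c := by
      intro x; rw [hq2']; simp
    rcases hzm c with h0 | h0
    · exact hroot 0 (by rw [IsRoot, hevq, h0]; simp)
    · rcases hzm b with h1 | h1
      · exact hroot 1 (by rw [IsRoot, hevq, h0, h1]; decide)
      · -- q = X^2 + X + 1
        have hq3 : q = X^2 + X + 1 := by rw [hq2', h0, h1]; simp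
        have h2 : (2 : (ZMod 2)[X]) = 0 := by
          have := CharP.cast_eq_zero ((ZMod 2)[X]) 2
          exact_mod_cast this
        obtain ⟨g, hg⟩ := hdvd
        have hdvd1 : q ∣ (X + 1 : (ZMod 2)[X]) := by
          refine ⟨g - X^2, ?_⟩
          have hrem : (X^4 - X^3 - X^2 - X + 1 : (ZMod 2)[X]) - q * X^2 = X + 1 := by
            rw [hq3]
            linear_combination (-(X:(ZMod 2)[X])^3 - X^2 - X) * h2
          rw [← hrem, hg]; ring
        have hz := Polynomial.eq_zero_of_dvd_of_degree_lt hdvd1 ?_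
        · have h10 := congrArg (fun p => Polynomial.coeff p 1) hz
          simp [Polynomial.coeff_one] at h10
        · have hd1 : degree (X + 1 : (ZMod 2)[X]) = 1 := by
            simpa using degree_X_add_C (1 : ZMod 2)
          rw [hd1, degree_eq_natDegree hq.ne_zero, hq2]
          decide

open Polynomial in
private lemma aux_irred_q : Irreducible (X^4 - X^3 - X^2 - X + 1 : ℚ[X]) := by
  have hmonz : (X^4 - X^3 - X^2 - X + 1 : ℤ[X]).Monic := by monicity!
  have hz : Irreducible (X^4 - X^3 - X^2 - X + 1 : ℤ[X]) := by
    apply hmonz.irreducible_of_irreducible_map (Int.castRingHom (ZMod 2))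
    have : (X^4 - X^3 - X^2 - X + 1 : ℤ[X]).map (Int.castRingHom (ZMod 2))
        = (X^4 - X^3 - X^2 - X + 1 : (ZMod 2)[X]) := by
      simp [Polynomial.map_add, Polynomial.map_sub, Polynomial.map_pow]
    rw [this]
    exact aux_irred_f2
  have := (IsPrimitive.Int.irreducible_iff_irreducible_map_cast hmonz.isPrimitive).mp hz
  have hmap : (X^4 - X^3 - X^2 - X + 1 : ℤ[X]).map (Int.castRingHom ℚ)
      = (X^4 - X^3 - X^2 - X + 1 : ℚ[X]) := by
    simp [Polynomial.map_add, Polynomial.map_sub, Polynomial.map_pow]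
  rwa [hmap] at this

open Polynomial in
private lemma aux_transfer (x y : ℝ)
    (hx : x ^ 4 - x ^ 3 - x ^ 2 - x + 1 = 0)
    (hy : y ^ 4 - y ^ 3 - y ^ 2 - y + 1 = 0)
    (f : ℚ[X]) (hf : aeval x f = 0) : aeval y f = 0 := by
  have hmon : (X^4 - X^3 - X^2 - X + 1 : ℚ[X]).Monic := by monicity!
  have hax : aeval x (X^4 - X^3 - X^2 - X + 1 : ℚ[X]) = 0 := by
    simpa using hx
  have hmin : minpoly ℚ x = (X^4 - X^3 - X^2 - X + 1 : ℚ[X]) :=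
    (minpoly.eq_of_irreducible_of_monic aux_irred_q hax hmon).symm
  have hdvd : minpoly ℚ x ∣ f := minpoly.dvd ℚ x hf
  obtain ⟨g, hg⟩ := hdvd
  rw [hg, map_mul, hmin]
  have hay : aeval y (X^4 - X^3 - X^2 - X + 1 : ℚ[X]) = 0 := by
    simpa using hy
  rw [hay, zero_mul]

open Polynomial in
private lemma aux_pow_sum_transfer (x y : ℝ)
    (hx : x ^ 4 - x ^ 3 - x ^ 2 - x + 1 = 0)
    (hy : y ^ 4 - y ^ 3 - y ^ 2 - y + 1 = 0)
    (l : Multiset ℕ) (g : ℚ[X])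
    (h : (l.map (x ^ ·)).sum = aeval x g) : (l.map (y ^ ·)).sum = aeval y g := by
  set f : ℚ[X] := (l.map (fun a => X^a)).sum - g with hf
  have key : ∀ z : ℝ, aeval z f = (l.map (z ^ ·)).sum - aeval z g := by
    intro z
    rw [hf, map_sub]
    congr 1
    rw [map_multiset_sum, Multiset.map_map]
    congr 1
    ext a
    simp
  have h0 : aeval x f = 0 := by rw [key, h, sub_self]
  have h2 := aux_transfer x y hx hy f h0
  rw [key] at h2
  linarith

private def ReachSet (γ t : ℝ) : Prop :=
  ∃ l : Multiset ℕ, (∀ a ∈ l, 1 ≤ a) ∧ (l.map (γ ^ ·)).sum = t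

private lemma aux_gap (γ : ℝ) (hγ0 : 0 < γ) (hγ1 : γ < 1) :
    ∀ (j : ℕ) (t : ℝ), 0 < t → ¬ ReachSet γ t →
    ∃ δ : ℝ, 0 < δ ∧ ∀ l : Multiset ℕ, Multiset.card l ≤ j → (∀ a ∈ l, 1 ≤ a) →
      δ ≤ |(l.map (γ ^ ·)).sum - t| := by
  intro j
  induction j with
  | zero =>
    intro t ht _
    refine ⟨t, ht, ?_⟩
    intro l hc _
    have hl0 : l = 0 := Multiset.card_eq_zero.mp (Nat.le_zero.mp hc)
    subst hl0
    simp [abs_of_nonneg ht.le]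
  | succ j ih =>
    intro t ht hr
    obtain ⟨M0, hM0⟩ := exists_pow_lt_of_lt_one
      (show (0:ℝ) < t/(2*(j+1)) by positivity) hγ1
    set M := max M0 1 with hMdef
    have hMpow : γ ^ M ≤ γ ^ M0 :=
      pow_le_pow_of_le_one hγ0.le hγ1.le (le_max_left _ _)
    have hM1 : 1 ≤ M := le_max_right _ _
    have key : ∀ a : ℕ, ∃ δ : ℝ, 0 < δ ∧ (1 ≤ a → ∀ l : Multiset ℕ,
        Multiset.card l ≤ j → (∀ b ∈ l, 1 ≤ b) →
        δ ≤ |γ^a + (l.map (γ ^ ·)).sum - t|) := by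
      intro a
      rcases lt_trichotomy (t - γ^a) 0 with hlt | heq | hgt
      · refine ⟨γ^a - t, by linarith, ?_⟩
        intro _ l _ _
        have hs : 0 ≤ (l.map (γ ^ ·)).sum := Multiset.sum_nonneg (by
          intro z hz
          obtain ⟨b, _, rfl⟩ := Multiset.mem_map.mp hz
          positivity)
        rw [abs_of_nonneg (by linarith)]
        linarith
      · refine ⟨1, one_pos, ?_⟩
        intro ha1 _ _ _
        exfalso
        apply hr
        refine ⟨{a}, by simpa using ha1, by simp; linarith⟩
      · by_cases ha1 : 1 ≤ a
        · have hur : ¬ ReachSet γ (t - γ^a) := by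
            rintro ⟨l, hl1, hl2⟩
            apply hr
            refine ⟨a ::ₘ l, ?_, ?_⟩
            · intro b hb
              rcases Multiset.mem_cons.mp hb with rfl | hb
              · exact ha1
              · exact hl1 b hb
            · rw [Multiset.map_cons, Multiset.sum_cons, hl2]; ring
          obtain ⟨δ, hδ, hP⟩ := ih (t - γ^a) hgt hur
          refine ⟨δ, hδ, ?_⟩
          intro _ l hc hmem
          have h1 := hP l hc hmem
          have h2 : (l.map (γ ^ ·)).sum - (t - γ^a) = γ^a + (l.map (γ ^ ·)).sum - t := by
            ring
          rwa [h2] at h1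
        · exact ⟨1, one_pos, fun h => absurd h ha1⟩
    choose F hF1 hF2 using key
    have hne : (Finset.Icc 1 M).Nonempty := ⟨1, Finset.mem_Icc.mpr ⟨le_refl 1, hM1⟩⟩
    refine ⟨min (t/2) ((Finset.Icc 1 M).inf' hne F), ?_, ?_⟩
    · apply lt_min (by positivity)
      apply (Finset.lt_inf'_iff hne).mpr
      intro a _
      exact hF1 a
    · intro l hc hmem
      by_cases hex : ∃ a ∈ l, a ≤ M
      · obtain ⟨a, hal, haM⟩ := hex
        obtain ⟨l', rfl⟩ := Multiset.exists_cons_of_mem hal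
        have ha1 : 1 ≤ a := hmem a hal
        have hc' : Multiset.card l' ≤ j := by
          rw [Multiset.card_cons] at hc
          omega
        have hmem' : ∀ b ∈ l', 1 ≤ b := fun b hb => hmem b (Multiset.mem_cons_of_mem hb)
        have h1 := hF2 a ha1 l' hc' hmem'
        have h2 : ((a ::ₘ l').map (γ ^ ·)).sum = γ^a + (l'.map (γ ^ ·)).sum := by
          rw [Multiset.map_cons, Multiset.sum_cons]
        rw [h2]
        refine le_trans (min_le_right _ _) (le_trans ?_ h1)
        exact Finset.inf'_le F (Finset.mem_Icc.mpr ⟨ha1, haM⟩)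
      · push_neg at hex
        have hsum : (l.map (γ ^ ·)).sum ≤ (Multiset.card (l.map (γ ^ ·))) • (γ ^ M) := by
          apply Multiset.sum_le_card_nsmul
          intro z hz
          obtain ⟨b, hb, rfl⟩ := Multiset.mem_map.mp hz
          exact pow_le_pow_of_le_one hγ0.le hγ1.le (hex b hb).le
        have hcard : ((Multiset.card (l.map (γ ^ ·))) : ℝ) ≤ (j+1 : ℝ) := by
          rw [Multiset.card_map]
          exact_mod_cast hc
        have hsum2 : (l.map (γ ^ ·)).sum ≤ (j+1 : ℝ) * γ ^ M := by
          rw [Multiset.card_map] at hcard hsum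
          calc (l.map (γ ^ ·)).sum ≤ (Multiset.card l) • (γ ^ M) := hsum
          _ = ((Multiset.card l : ℝ)) * γ ^ M := by rw [nsmul_eq_mul]
          _ ≤ (j+1 : ℝ) * γ ^ M := by
              apply mul_le_mul_of_nonneg_right hcard (by positivity)
        have hsum3 : (l.map (γ ^ ·)).sum ≤ t/2 := by
          have : (j+1 : ℝ) * γ ^ M ≤ (j+1 : ℝ) * (t/(2*(j+1))) := by
            apply mul_le_mul_of_nonneg_left (le_trans hMpow hM0.le) (by positivity)
          have heq : (j+1 : ℝ) * (t/(2*(j+1))) = t/2 := by field_simp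
          linarith
        have hs0 : 0 ≤ (l.map (γ ^ ·)).sum := Multiset.sum_nonneg (by
          intro z hz
          obtain ⟨b, _, rfl⟩ := Multiset.mem_map.mp hz
          positivity)
        rw [abs_of_nonpos (by linarith)]
        refine le_trans (min_le_left _ _) ?_
        linarith

private lemma aux_fact (α : ℝ) (hroot : α ^ 4 - α ^ 3 - α ^ 2 - α + 1 = 0) :
    ∀ m : ℕ, ∃ r : Multiset ℕ, Multiset.card r = m + 1 ∧
      ((((3*m+3) ::ₘ (3*m+2) ::ₘ r)).map (α ^ ·)).sum = α ^ (3*m+4) + 1 := by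
  intro m
  induction m with
  | zero =>
    refine ⟨{1}, rfl, ?_⟩
    simp only [Multiset.map_cons, Multiset.sum_cons, Multiset.map_singleton,
      Multiset.sum_singleton]
    norm_num
    linear_combination -hroot
  | succ m ih =>
    obtain ⟨r, hcr, hsr⟩ := ih
    refine ⟨(3*m+2) ::ₘ r, by simp [hcr], ?_⟩
    simp only [Multiset.map_cons, Multiset.sum_cons] at hsr ⊢
    have h37 : 3*(m+1)+4 = (3*m+3)+4 := by ring
    have h33 : 3*(m+1)+3 = (3*m+3)+3 := by ring
    have h32 : 3*(m+1)+2 = (3*m+3)+2 := by ring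
    rw [h37, h33, h32]
    have e1 : α ^ ((3*m+3)+4) = α ^ (3*m+3) * α ^ 4 := by rw [pow_add]
    have e2 : α ^ ((3*m+3)+3) = α ^ (3*m+3) * α ^ 3 := by rw [pow_add]
    have e3 : α ^ ((3*m+3)+2) = α ^ (3*m+3) * α ^ 2 := by rw [pow_add]
    have e4 : α ^ (3*m+3) = α ^ (3*m) * α ^ 3 := by rw [pow_add]
    have e5 : α ^ (3*m+2) = α ^ (3*m) * α ^ 2 := by rw [pow_add]
    have e6 : α ^ (3*m+4) = α ^ (3*m) * α ^ 4 := by rw [pow_add]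
    rw [e1, e2, e3, e4, e5]
    rw [e4, e5, e6] at hsr
    linear_combination hsr - (α^(3*m) * α^3) * hroot

/-- Let `α > 1` be the real root of `X⁴ - X³ - X² - X + 1` exceeding `1`, with `ℕ₀[α]`
atomic with atoms `{α^n}`. Then `ℕ₀[α]` does not satisfy the structure property for sets
of lengths: there are no `d ∈ ℕ` and `N ∈ ℕ₀` such that every set of lengths of a nonzero
element is an AAP with difference `d` and bound `N`. -/
theorem stmt_13 (α : ℝ) (hα : 1 < α)
    (hroot : α ^ 4 - α ^ 3 - α ^ 2 - α + 1 = 0)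
    (M : AddSubmonoid ℝ)
    (hM : M = AddSubmonoid.closure (Set.range fun k : ℕ => α ^ k))
    (hatoms : ∀ a, IsAddAtomIn M a ↔ ∃ k : ℕ, a = α ^ k)
    (hatomic : ∀ x ∈ M, x ≠ 0 → ∃ l : Multiset ℝ, (∀ a ∈ l, IsAddAtomIn M a) ∧ l.sum = x) :
    ¬ ∃ (d : ℕ) (N : ℕ), 0 < d ∧
      ∀ x ∈ M, x ≠ 0 → IsAAP ((fun ℓ : ℕ => (ℓ : ℤ)) '' lengthsIn M x) d N := by
  rintro ⟨d, N, hd, H⟩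
  have hα0 : (0:ℝ) < α := lt_trans one_pos hα
  have hαne : α ≠ 0 := ne_of_gt hα0
  set γ : ℝ := α⁻¹ with hγdef
  have hγ0 : 0 < γ := inv_pos.mpr hα0
  have hγ1 : γ < 1 := inv_lt_one_of_one_lt₀ hα
  have hγα : ∀ a : ℕ, γ ^ a = (α ^ a)⁻¹ := by
    intro a; rw [hγdef, inv_pow]
  have hγroot : γ ^ 4 - γ ^ 3 - γ ^ 2 - γ + 1 = 0 := by
    have h4 : α ^ 4 ≠ 0 := pow_ne_zero _ hαne
    rw [hγdef]
    field_simp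
    linear_combination hroot
  -- powers belong to M
  have hpow : ∀ j : ℕ, α ^ j ∈ M := by
    intro j
    rw [hM]
    exact AddSubmonoid.subset_closure ⟨j, rfl⟩
  -- lengths characterization
  have hlen : ∀ (n : ℕ) (x : ℝ), n ∈ lengthsIn M x ↔
      ∃ e : Multiset ℕ, Multiset.card e = n ∧ (e.map (α ^ ·)).sum = x := by
    intro n x
    constructor
    · rintro ⟨l, hl1, hl2, hl3⟩
      have : ∀ l : Multiset ℝ, (∀ a ∈ l, ∃ j : ℕ, a = α ^ j) →
          ∃ e : Multiset ℕ, e.map (α ^ ·) = l := by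
        intro l
        induction l using Multiset.induction_on with
        | empty => exact fun _ => ⟨0, rfl⟩
        | cons a l ih =>
          intro h
          obtain ⟨j, hj⟩ := h a (Multiset.mem_cons_self a l)
          obtain ⟨e, he⟩ := ih (fun b hb => h b (Multiset.mem_cons_of_mem hb))
          exact ⟨j ::ₘ e, by rw [Multiset.map_cons, he, hj]⟩
      obtain ⟨e, he⟩ := this l (fun a ha => (hatoms a).mp (hl1 a ha))
      refine ⟨e, ?_, by rw [he, hl2]⟩
      rw [← hl3, ← he, Multiset.card_map]
    · rintro ⟨e, he1, he2⟩
      refine ⟨e.map (α ^ ·), ?_, he2, by rw [Multiset.card_map, he1]⟩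
      intro a ha
      obtain ⟨j, _, rfl⟩ := Multiset.mem_map.mp ha
      exact (hatoms _).mpr ⟨j, rfl⟩
  -- nonnegativity of power sums
  have hsum_nonneg : ∀ e : Multiset ℕ, 0 ≤ (e.map (α ^ ·)).sum := by
    intro e
    apply Multiset.sum_nonneg
    intro z hz
    obtain ⟨b, _, rfl⟩ := Multiset.mem_map.mp hz
    positivity
  have hsum_nonnegγ : ∀ e : Multiset ℕ, 0 ≤ (e.map (γ ^ ·)).sum := by
    intro e
    apply Multiset.sum_nonneg
    intro z hz
    obtain ⟨b, _, rfl⟩ := Multiset.mem_map.mp hz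
    positivity
  -- 1 is not reachable by powers of γ with positive exponents
  have hone : ¬ ReachSet γ 1 := by
    rintro ⟨l, hl1, hl2⟩
    have h1 : (l.map (γ ^ ·)).sum = Polynomial.aeval γ (1 : Polynomial ℚ) := by
      rw [map_one]; exact hl2
    have h2 := aux_pow_sum_transfer γ α hγroot hroot l 1 h1
    rw [map_one] at h2
    rcases Multiset.empty_or_exists_mem l with rfl | ⟨a, ha⟩
    · simp at h2
    · obtain ⟨l', rfl⟩ := Multiset.exists_cons_of_mem ha
      rw [Multiset.map_cons, Multiset.sum_cons] at h2
      have ha1 : 1 ≤ a := hl1 a ha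
      have : α ≤ α ^ a := by
        calc α = α ^ 1 := (pow_one α).symm
        _ ≤ α ^ a := pow_le_pow_right₀ hα.le ha1
      have := hsum_nonneg l'
      linarith
  -- the gap bound
  set B : ℕ := N + d + 3 with hBdef
  obtain ⟨δ, hδ0, hδ⟩ := aux_gap γ hγ0 hγ1 B 1 one_pos hone
  obtain ⟨n₀, hn₀⟩ := exists_pow_lt_of_lt_one hδ0 hγ1
  set k : ℕ := max (N + d + 1) n₀ with hkdef
  have hk1 : 1 ≤ k := le_trans (by omega) (le_max_left _ _)
  have hkN : N + d + 1 ≤ k := le_max_left _ _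
  set n : ℕ := 3 * k + 1 with hndef
  have hγn : γ ^ n < δ := by
    calc γ ^ n ≤ γ ^ n₀ :=
      pow_le_pow_of_le_one hγ0.le hγ1.le (by omega)
    _ < δ := hn₀
  set y : ℝ := α ^ n + 1 with hydef
  have hyM : y ∈ M := by
    have h1 : (1:ℝ) ∈ M := by simpa using hpow 0
    exact M.add_mem (hpow n) h1
  have hy0 : y ≠ 0 := by positivity
  -- length 2
  have h2len : 2 ∈ lengthsIn M y := by
    rw [hlen]
    refine ⟨{n, 0}, rfl, ?_⟩
    simp [hydef]
  -- length k+2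
  have hklen : (k + 2) ∈ lengthsIn M y := by
    rw [hlen]
    obtain ⟨m, hm⟩ : ∃ m : ℕ, k = m + 1 := ⟨k - 1, by omega⟩
    obtain ⟨r, hcr, hsr⟩ := aux_fact α hroot m
    refine ⟨(3*m+3) ::ₘ (3*m+2) ::ₘ r, by simp [hcr]; omega, ?_⟩
    rw [hsr, hydef, hndef, hm]
    norm_num
    ring_nf
  -- classification of lengths
  have hclass : ∀ ℓ ∈ lengthsIn M y, ℓ = 2 ∨ B ≤ ℓ := by
    intro ℓ hℓ
    by_contra hcon
    push_neg at hcon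
    obtain ⟨hne2, hltB⟩ := hcon
    rw [hlen] at hℓ
    obtain ⟨e, hce, hse⟩ := hℓ
    -- transfer to γ
    have hseγ : (e.map (γ ^ ·)).sum = γ ^ n + 1 := by
      have h1 : (e.map (α ^ ·)).sum
          = Polynomial.aeval α ((Polynomial.X : Polynomial ℚ) ^ n + 1) := by
        rw [hse, hydef]; simp
      have h2 := aux_pow_sum_transfer α γ hroot hγroot e _ h1
      rw [h2]; simp
    have hγn1 : γ ^ n < 1 := pow_lt_one₀ hγ0.le hγ1 (by omega)
    rcases Nat.lt_or_ge ℓ 2 with hℓ2 | hℓ2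
    · interval_cases ℓ
      · -- length 0
        have : e = 0 := Multiset.card_eq_zero.mp hce
        subst this
        simp at hse
        rw [hydef] at hse
        nlinarith [pow_pos hα0 n]
      · -- length 1
        obtain ⟨a, ha⟩ := Multiset.card_eq_one.mp hce
        subst ha
        simp only [Multiset.map_singleton, Multiset.sum_singleton] at hseγ
        have : γ ^ a ≤ 1 := pow_le_one₀ hγ0.le hγ1.le
        nlinarith [pow_pos hγ0 n]
    · have hℓ3 : 3 ≤ ℓ := by omega
      rcases Nat.lt_or_ge (e.count 0) 1 with hs0 | hs1
      · -- no zero exponents : gap lemma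
        have hmem1 : ∀ a ∈ e, 1 ≤ a := by
          intro a ha
          rcases Nat.eq_zero_or_pos a with rfl | h
          · exact absurd (Multiset.count_pos.mpr ha) (by omega)
          · exact h
        have hcard : Multiset.card e ≤ B := by omega
        have := hδ e hcard hmem1
        rw [hseγ] at this
        have habs : |γ ^ n + 1 - 1| = γ ^ n := by
          rw [add_sub_cancel_right]
          exact abs_of_pos (pow_pos hγ0 n)
        rw [habs] at this
        linarith
      · rcases Nat.lt_or_ge (e.count 0) 2 with hs1' | hs2
        · -- exactly one zero exponent
          have h0e : (0:ℕ) ∈ e := Multiset.count_pos.mp (by omega)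
          obtain ⟨e₁, rfl⟩ := Multiset.exists_cons_of_mem h0e
          have h01 : (0:ℕ) ∉ e₁ := by
            intro hmem
            have := Multiset.count_cons_self (0:ℕ) e₁
            have h2 := Multiset.count_pos.mpr hmem
            omega
          have hmem1 : ∀ a ∈ e₁, 1 ≤ a := by
            intro a ha
            rcases Nat.eq_zero_or_pos a with rfl | h
            · exact absurd ha h01
            · exact h
          rw [Multiset.map_cons, Multiset.sum_cons, pow_zero] at hse hseγ
          have hsα : (e₁.map (α ^ ·)).sum = α ^ n := by
            rw [hydef] at hse; linarith
          have hsγ : (e₁.map (γ ^ ·)).sum = γ ^ n := by linarith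
          -- all exponents in e₁ are ≥ n
          have hge : ∀ a ∈ e₁, α ^ n ≤ α ^ a := by
            intro a ha
            have h1 : γ ^ a ≤ (e₁.map (γ ^ ·)).sum := by
              apply Multiset.single_le_sum
              · intro z hz
                obtain ⟨b, _, rfl⟩ := Multiset.mem_map.mp hz
                positivity
              · exact Multiset.mem_map_of_mem _ ha
            rw [hsγ] at h1
            rw [hγα, hγα] at h1
            have h2 := pow_pos hα0 a
            have h3 := pow_pos hα0 n
            rw [inv_le_inv₀ h2 h3] at h1
            exact h1
          -- but there are at least two of them
          have hc1 : 2 ≤ Multiset.card e₁ := by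
            rw [Multiset.card_cons] at hce
            omega
          obtain ⟨a, ha⟩ : ∃ a, a ∈ e₁ := Multiset.exists_mem_of_ne_zero (by
            intro h; rw [h] at hc1; simp at hc1)
          obtain ⟨e₂, rfl⟩ := Multiset.exists_cons_of_mem ha
          obtain ⟨b, hb⟩ : ∃ b, b ∈ e₂ := Multiset.exists_mem_of_ne_zero (by
            intro h
            rw [h] at hc1
            simp at hc1)
          rw [Multiset.map_cons, Multiset.sum_cons] at hsα
          have h1 : α ^ n ≤ α ^ a := hge a (Multiset.mem_cons_self a e₂)
          have h2 : α ^ n ≤ α ^ b := hge b (Multiset.mem_cons_of_mem hb)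
          have h3 : α ^ b ≤ (e₂.map (α ^ ·)).sum := by
            apply Multiset.single_le_sum
            · intro z hz
              obtain ⟨u, _, rfl⟩ := Multiset.mem_map.mp hz
              positivity
            · exact Multiset.mem_map_of_mem _ hb
          have h4 := pow_pos hα0 n
          linarith
        · -- at least two zero exponents
          have h2le : Multiset.replicate 2 (0:ℕ) ≤ e :=
            Multiset.le_count_iff_replicate_le.mp hs2
          obtain ⟨e₂, he₂⟩ := Multiset.le_iff_exists_add.mp h2le
          rw [he₂, Multiset.map_add, Multiset.sum_add] at hseγ
          have hrep : (Multiset.map (α⁻¹ ^ ·) (Multiset.replicate 2 (0:ℕ))).sum = 2 := by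
            simp
            norm_num
          have h0 := hsum_nonnegγ e₂
          rw [show ((γ ^ ·) : ℕ → ℝ) = (α⁻¹ ^ ·) from rfl] at hseγ h0
          rw [hrep] at hseγ
          linarith
  -- The AAP structure contradiction
  obtain ⟨c, S', S'', m, hm0, hS'sub, htop, hjsub, hdvdS, hSeq⟩ := H y hyM hy0
  have h2S : (2:ℤ) ∈ ((fun ℓ : ℕ => (ℓ : ℤ)) '' lengthsIn M y) :=
    ⟨2, h2len, by norm_num⟩
  have hk2S : ((k:ℤ) + 2) ∈ ((fun ℓ : ℕ => (ℓ : ℤ)) '' lengthsIn M y) :=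
    ⟨k + 2, hklen, by push_cast; ring⟩
  have hclassZ : ∀ z : ℤ, z ∈ ((fun ℓ : ℕ => (ℓ : ℤ)) '' lengthsIn M y) →
      z = 2 ∨ (B:ℤ) ≤ z := by
    rintro z ⟨ℓ, hℓ, rfl⟩
    rcases hclass ℓ hℓ with h | h
    · left; simp only []; exact_mod_cast h
    · right; simp only []; exact_mod_cast h
  have hcS : c ∈ ((fun ℓ : ℕ => (ℓ : ℤ)) '' lengthsIn M y) := by
    rw [hSeq]
    exact ⟨0, Or.inl (Or.inr ⟨0, hm0, by simp⟩), by simp⟩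
  rcases hclassZ c hcS with hc2 | hcB
  · -- c = 2
    by_cases h1m : (1:ℕ∞) < m
    · have h2dS : (2 + (d:ℤ)) ∈ ((fun ℓ : ℕ => (ℓ : ℤ)) '' lengthsIn M y) := by
        rw [hSeq]
        exact ⟨(d:ℤ) * 1, Or.inl (Or.inr ⟨1, by simpa using h1m, by norm_num⟩),
          by rw [hc2]; ring⟩
      rcases hclassZ _ h2dS with h | h
      · have : (d:ℤ) = 0 := by linarith
        have : d = 0 := by exact_mod_cast this
        omega
      · rw [hBdef] at h
        push_cast at h
        omega
    · have hm1 : m = 1 := by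
        rcases eq_or_lt_of_le (not_lt.mp h1m) with h | h
        · exact h
        · rw [ENat.lt_one_iff_eq_zero] at h
          rw [h] at hm0
          exact absurd hm0 (lt_irrefl 0)
      have hS''sub := hjsub 1 (by rw [hm1]; norm_num)
      rw [hSeq] at hk2S
      obtain ⟨s, hsmem, hadd⟩ := hk2S
      simp only [] at hadd
      rcases hsmem with (hs | hs) | hs
      · have := hS'sub hs
        rw [Set.mem_Icc] at this
        have hk1' : (1:ℤ) ≤ (k:ℤ) := by exact_mod_cast hk1
        omega
      · obtain ⟨k', hk'm, rfl⟩ := hs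
        rw [hm1] at hk'm
        have hk'0 : k' = 0 := by
          have : k' < 1 := by exact_mod_cast hk'm
          omega
        rw [hk'0] at hadd
        have hk1' : (1:ℤ) ≤ (k:ℤ) := by exact_mod_cast hk1
        rw [hc2] at hadd
        push_cast at hadd
        omega
      · have := hS''sub hs
        rw [Set.mem_Icc] at this
        have hkN' : (N:ℤ) + (d:ℤ) + 1 ≤ (k:ℤ) := by exact_mod_cast hkN
        have hd' : (1:ℤ) ≤ (d:ℤ) := by exact_mod_cast hd
        rw [hc2] at hadd
        omega
  · -- B ≤ c
    rw [hSeq] at h2S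
    obtain ⟨s, hsmem, hadd⟩ := h2S
    simp only [] at hadd
    have hB' : ((B:ℕ):ℤ) = (N:ℤ) + (d:ℤ) + 3 := by rw [hBdef]; push_cast; ring
    have hd' : (1:ℤ) ≤ (d:ℤ) := by exact_mod_cast hd
    rcases hsmem with (hs | hs) | hs
    · have := hS'sub hs
      rw [Set.mem_Icc] at this
      omega
    · obtain ⟨k', _, rfl⟩ := hs
      have : (0:ℤ) ≤ (d:ℤ) * k' := by positivity
      omega
    · cases m using ENat.recTopCoe with
      | top =>
        rw [htop rfl] at hs
        exact absurd hs (Set.notMem_empty s)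
      | coe j =>
        have hj1 : 1 ≤ j := by
          by_contra h
          push_neg at h
          interval_cases j
          · simp at hm0
        have := hjsub j rfl hs
        rw [Set.mem_Icc] at this
        have hj1' : (1:ℤ) ≤ (j:ℤ) := by exact_mod_cast hj1
        have : (0:ℤ) ≤ (d:ℤ) * ((j:ℤ) - 1) := by
          apply mul_nonneg (by positivity)
          omega
        omega
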